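/- A function that is continuous on [a,b], has bounded variation on [a,b], and maps null sets to null sets (Lusin's N-property) is absolutely continuous on [a,b]. -/

import Mathlib

open Set MeasureTheory Filter
open scoped Topology ENNReal

def NonOverlapping {m : ℕ} (a b : Fin m → ℝ) : Prop :=
  ∀ i j, i ≠ j → b i ≤ a j ∨ b j ≤ a i

def ACOnReal (g : ℝ → ℝ) (I : Set ℝ) : Prop :=
  ∀ ε > (0:ℝ), ∃ δ > (0:ℝ), ∀ (m : ℕ) (a b : Fin m → ℝ),
    (∀ i, a i ≤ b i ∧ Set.Icc (a i) (b i) ⊆ I) → NonOverlapping a b →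
    (∑ i, (b i - a i)) < δ → (∑ i, |g (b i) - g (a i)|) < ε

lemma BZ_abs_deriv_le {g V : ℝ → ℝ} {a b x : ℝ} (hx : x ∈ Set.Ioo a b)
    {c d : ℝ} (hg : HasDerivAt g c x) (hV : HasDerivAt V d x)
    (hle : ∀ u v, u ∈ Set.Icc a b → v ∈ Set.Icc a b → u ≤ v → |g v - g u| ≤ V v - V u) :
    |c| ≤ d := by
  have hmono : 𝓝[>] x ≤ 𝓝[≠] x := nhdsWithin_mono x (fun y hy => (ne_of_gt hy : y ≠ x))
  have h1 : Tendsto (fun y => |slope g x y|) (𝓝[>] x) (𝓝 |c|) :=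
    (((hasDerivAt_iff_tendsto_slope.1 hg).mono_left hmono).abs)
  have h2 : Tendsto (slope V x) (𝓝[>] x) (𝓝 d) :=
    (hasDerivAt_iff_tendsto_slope.1 hV).mono_left hmono
  refine le_of_tendsto_of_tendsto h1 h2 ?_
  filter_upwards [Ioo_mem_nhdsGT_of_mem ⟨le_refl x, hx.2⟩] with y hy
  have hxy : x < y := hy.1
  have hxI : x ∈ Set.Icc a b := ⟨hx.1.le, hx.2.le⟩
  have hyI : y ∈ Set.Icc a b := ⟨hx.1.le.trans hxy.le, hy.2.le⟩
  have key := hle x y hxI hyI hxy.le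
  have hpos : (0:ℝ) < y - x := sub_pos.2 hxy
  have e1 : slope g x y = (g y - g x) / (y - x) := by
    rw [slope]; simp [vsub_eq_sub]; ring
  have e2 : slope V x y = (V y - V x) / (y - x) := by
    rw [slope]; simp [vsub_eq_sub]; ring
  rw [e1, e2, abs_div, abs_of_pos hpos]
  gcongr

lemma BZ_deriv_nonneg {V : ℝ → ℝ} (hm : Monotone V) (x : ℝ) : 0 ≤ deriv V x := by
  by_cases hd : DifferentiableAt ℝ V x
  · have hmono : 𝓝[>] x ≤ 𝓝[≠] x := nhdsWithin_mono x (fun y hy => (ne_of_gt hy : y ≠ x))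
    have h2 : Tendsto (slope V x) (𝓝[>] x) (𝓝 (deriv V x)) :=
      (hasDerivAt_iff_tendsto_slope.1 hd.hasDerivAt).mono_left hmono
    refine ge_of_tendsto h2 ?_
    filter_upwards [self_mem_nhdsWithin] with y hy
    have hxy : x < y := hy
    have e2 : slope V x y = (V y - V x) / (y - x) := by
      rw [slope]; simp [vsub_eq_sub]; ring
    rw [e2]
    exact div_nonneg (sub_nonneg.2 (hm hxy.le)) (sub_pos.2 hxy).le
  · rw [deriv_zero_of_not_differentiableAt hd]

lemma BZ_const_deriv_zero {V : ℝ → ℝ} {x y d : ℝ} (hxy : x < y)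
    (hV : HasDerivAt V d x) (hconst : ∀ t ∈ Set.Icc x y, V t = V x) : d = 0 := by
  have h1 : HasDerivWithinAt V d (Set.Icc x y) x := hV.hasDerivWithinAt
  have h2 : HasDerivWithinAt V 0 (Set.Icc x y) x := by
    have h3 : HasDerivWithinAt (fun _ => V x) 0 (Set.Icc x y) x :=
      (hasDerivAt_const x (V x)).hasDerivWithinAt
    exact h3.congr (fun t ht => (hconst t ht)) (hconst x ⟨le_rfl, hxy.le⟩)
  have hu : UniqueDiffWithinAt ℝ (Set.Icc x y) x :=
    (uniqueDiffOn_Icc hxy) x ⟨le_rfl, hxy.le⟩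
  rw [← h1.derivWithin hu, ← h2.derivWithin hu]


set_option maxHeartbeats 1000000 in
theorem stmt_9 (a b : ℝ) (hab : a ≤ b) (g : ℝ → ℝ)
    (hcont : ContinuousOn g (Set.Icc a b))
    (hbv : BoundedVariationOn g (Set.Icc a b))
    (hN : ∀ S ⊆ Set.Icc a b, MeasureTheory.volume S = 0 →
      MeasureTheory.volume (g '' S) = 0) :
    ACOnReal g (Set.Icc a b) := by
  intro ε hε
  set s := Set.Icc a b with hsdef
  have hlbv : LocallyBoundedVariationOn g s := hbv.locallyBoundedVariationOn
  have has : a ∈ s := ⟨le_rfl, hab⟩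
  -- clamped variation function
  set π : ℝ → ℝ := fun x => max a (min b x) with hπ
  have hπmem : ∀ x, π x ∈ s := fun x => ⟨le_max_left _ _, max_le hab (min_le_left _ _)⟩
  have hπmono : Monotone π := fun x y h => max_le_max le_rfl (min_le_min le_rfl h)
  have hπid : ∀ x ∈ s, π x = x := by
    intro x hx
    simp only [hπ]
    rw [min_eq_right hx.2, max_eq_right hx.1]
  set V : ℝ → ℝ := fun x => variationOnFromTo g s a (π x) with hV
  have hVmono : Monotone V := fun x y h =>
    variationOnFromTo.monotoneOn hlbv has (hπmem x) (hπmem y) (hπmono h)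
  have key : ∀ u v, u ∈ s → v ∈ s → u ≤ v → |g v - g u| ≤ V v - V u := by
    intro u v hu hv huv
    have hVu : V u = variationOnFromTo g s a u := by rw [hV]; simp only [hπid u hu]
    have hVv : V v = variationOnFromTo g s a v := by rw [hV]; simp only [hπid v hv]
    have hadd : variationOnFromTo g s a u + variationOnFromTo g s u v
        = variationOnFromTo g s a v := variationOnFromTo.add hlbv has hu hv
    have hfin : eVariationOn g (s ∩ Set.Icc u v) ≠ ⊤ :=
      (lt_of_le_of_lt (eVariationOn.mono g inter_subset_left)
        (lt_top_iff_ne_top.2 hbv)).ne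
    have h1 : edist (g u) (g v) ≤ eVariationOn g (s ∩ Set.Icc u v) :=
      eVariationOn.edist_le g ⟨hu, le_rfl, huv⟩ ⟨hv, huv, le_rfl⟩
    have h2 : |g v - g u| ≤ variationOnFromTo g s u v := by
      rw [variationOnFromTo.eq_of_le g s huv]
      have h3 : (edist (g u) (g v)).toReal ≤ (eVariationOn g (s ∩ Set.Icc u v)).toReal :=
        ENNReal.toReal_mono hfin h1
      rwa [edist_dist, ENNReal.toReal_ofReal dist_nonneg, Real.dist_eq, abs_sub_comm] at h3
    rw [hVu, hVv, ← hadd]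
    linarith
  -- differentiability set
  set D : Set ℝ := (Set.Ioo a b ∩ {x | DifferentiableAt ℝ g x}) ∩
      {x | DifferentiableAt ℝ V x} with hD
  have hDmeas : MeasurableSet D :=
    (measurableSet_Ioo.inter (measurableSet_of_differentiableAt ℝ g)).inter
      (measurableSet_of_differentiableAt ℝ V)
  have hDIoo : D ⊆ Set.Ioo a b := fun x hx => hx.1.1
  have hgae : ∀ᵐ x, x ∈ s → DifferentiableWithinAt ℝ g s x :=
    hlbv.ae_differentiableWithinAt_of_mem
  have hVae : ∀ᵐ (x : ℝ), DifferentiableAt ℝ V x := hVmono.ae_differentiableAt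
  have hbadae : ∀ᵐ x, x ∈ Set.Ioo a b → x ∈ D := by
    filter_upwards [hgae, hVae] with x h1 h2
    intro hx
    exact ⟨⟨hx, (h1 ⟨hx.1.le, hx.2.le⟩).differentiableAt (Icc_mem_nhds hx.1 hx.2)⟩, h2⟩
  have hbadnull : volume {x | x ∈ Set.Ioo a b ∧ x ∉ D} = 0 := by
    have hset : {x | x ∈ Set.Ioo a b ∧ x ∉ D} = {x | ¬ (x ∈ Set.Ioo a b → x ∈ D)} := by
      ext x; simp [Classical.not_imp]; tauto
    rw [hset, ← ae_iff]
    exact hbadae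
  have hZ : volume (s \ D) = 0 := by
    have hsub : s \ D ⊆ ({a} ∪ {b}) ∪ {x | x ∈ Set.Ioo a b ∧ x ∉ D} := by
      rintro x ⟨hxs, hxD⟩
      rcases eq_or_lt_of_le hxs.1 with h | h
      · exact Or.inl (Or.inl h.symm)
      rcases eq_or_lt_of_le hxs.2 with h' | h'
      · exact Or.inl (Or.inr h')
      · exact Or.inr ⟨⟨h, h'⟩, hxD⟩
    exact measure_mono_null hsub
      (measure_union_null (measure_union_null Real.volume_singleton Real.volume_singleton)
        hbadnull)
  have hDg : ∀ x ∈ D, HasDerivAt g (deriv g x) x := fun x hx => hx.1.2.hasDerivAt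
  have hDV : ∀ x ∈ D, HasDerivAt V (deriv V x) x := fun x hx => hx.2.hasDerivAt
  have hcmp : ∀ x ∈ D, |deriv g x| ≤ deriv V x := fun x hx =>
    BZ_abs_deriv_le hx.1.1 (hDg x hx) (hDV x hx) key
  have hVnn : ∀ x, 0 ≤ deriv V x := BZ_deriv_nonneg hVmono
  -- the density
  set h : ℝ → ℝ≥0∞ := fun x => ENNReal.ofReal (deriv V x) with hh
  have hhmeas : Measurable h := (measurable_deriv V).ennreal_ofReal
  -- finiteness of the total integral of h
  set D' : Set ℝ := D ∩ {x | 0 < deriv V x} with hD'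
  have hD'meas : MeasurableSet D' :=
    hDmeas.inter (measurableSet_lt measurable_const (measurable_deriv V))
  have hinj : Set.InjOn V D' := by
    have haux : ∀ x ∈ D', ∀ y ∈ D', x < y → V x ≠ V y := by
      intro x hx y hy hxy heq
      have hconst : ∀ t ∈ Set.Icc x y, V t = V x :=
        fun t ht => le_antisymm (heq ▸ hVmono ht.2) (hVmono ht.1)
      have := BZ_const_deriv_zero hxy (hDV x hx.1) hconst
      exact (lt_irrefl (0:ℝ)) (this ▸ hx.2)
    intro x hx y hy heq
    rcases lt_trichotomy x y with h | h | h
    · exact absurd heq (haux x hx y hy h)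
    · exact h
    · exact absurd heq.symm (haux y hy x hx h)
  have himgD' : volume (V '' D') ≤ ENNReal.ofReal (V b - V a) := by
    have hsub : V '' D' ⊆ Set.Icc (V a) (V b) := by
      rintro _ ⟨x, hx, rfl⟩
      exact ⟨hVmono (hDIoo hx.1).1.le, hVmono (hDIoo hx.1).2.le⟩
    calc volume (V '' D') ≤ volume (Set.Icc (V a) (V b)) := measure_mono hsub
      _ = ENNReal.ofReal (V b - V a) := Real.volume_Icc
  have hintD' : ∫⁻ x in D', h x ≤ ENNReal.ofReal (V b - V a) := by
    have hVD' : ∀ x ∈ D', HasFDerivWithinAt V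
        ((1 : ℝ →L[ℝ] ℝ).smulRight (deriv V x)) D' x :=
      fun x hx => ((hDV x hx.1).hasFDerivAt).hasFDerivWithinAt
    have hle := lintegral_abs_det_fderiv_le_addHaar_image volume hD'meas hVD' hinj
    refine le_trans (le_of_eq ?_) (hle.trans himgD')
    refine setLIntegral_congr_fun_ae hD'meas (ae_of_all _ fun x hx => ?_)
    rw [ContinuousLinearMap.smulRight_one_eq_toSpanSingleton, ContinuousLinearMap.det_toSpanSingleton, abs_of_nonneg (hVnn x)]
  have hcomplnull : ∫⁻ x in D'ᶜ, h x = 0 := by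
    have hae : ∀ᵐ x, x ∈ D'ᶜ → h x = 0 := by
      have hexc : ∀ᵐ x, x ∉ ({a} ∪ {b} : Set ℝ) ∪ {x | x ∈ Set.Ioo a b ∧ x ∉ D} := by
        exact compl_mem_ae_iff.2 (measure_union_null
          (measure_union_null Real.volume_singleton Real.volume_singleton) hbadnull)
      filter_upwards [hexc] with x hxe hxc
      by_contra hne
      have hdpos : 0 < deriv V x := lt_of_le_of_ne (hVnn x) fun h0 => hne (by
        rw [hh]; simp [← h0])
      have hdiffV : DifferentiableAt ℝ V x := by
        by_contra hnd
        rw [deriv_zero_of_not_differentiableAt hnd] at hdpos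
        exact lt_irrefl _ hdpos
      -- x must be outside Icc a b or in the exceptional set
      rcases lt_trichotomy x a with hxa | hxa | hxa
      · -- V is locally constant near x, so deriv V x = 0
        have hloc : V =ᶠ[𝓝 x] fun _ => V a := by
          filter_upwards [Iio_mem_nhds hxa] with t ht
          show variationOnFromTo g s a (π t) = variationOnFromTo g s a (π a)
          congr 1
          rw [hπid a has]
          simp only [hπ]
          rw [min_eq_right (le_trans ht.le hab), max_eq_left ht.le]
        have : deriv V x = 0 := by
          rw [Filter.EventuallyEq.deriv_eq hloc, deriv_const]
        exact lt_irrefl _ (this ▸ hdpos)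
      · exact hxe (Or.inl (Or.inl hxa))
      rcases lt_trichotomy x b with hxb | hxb | hxb
      · -- x ∈ Ioo a b; then x ∈ D would give x ∈ D', contradiction
        by_cases hxD : x ∈ D
        · exact hxc ⟨hxD, hdpos⟩
        · exact hxe (Or.inr ⟨⟨hxa, hxb⟩, hxD⟩)
      · exact hxe (Or.inl (Or.inr hxb))
      · have hloc : V =ᶠ[𝓝 x] fun _ => V b := by
          filter_upwards [Ioi_mem_nhds hxb] with t ht
          show variationOnFromTo g s a (π t) = variationOnFromTo g s a (π b)
          congr 1
          rw [hπid b ⟨hab, le_rfl⟩]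
          simp only [hπ]
          rw [min_eq_left ht.le, max_eq_right hab]
        have : deriv V x = 0 := by
          rw [Filter.EventuallyEq.deriv_eq hloc, deriv_const]
        exact lt_irrefl _ (this ▸ hdpos)
    calc ∫⁻ x in D'ᶜ, h x = ∫⁻ x in D'ᶜ, 0 := by
          exact setLIntegral_congr_fun_ae hD'meas.compl hae
      _ = 0 := lintegral_zero
  have hfin : ∫⁻ x, h x ≠ ⊤ := by
    rw [← lintegral_add_compl (f := h) hD'meas]
    exact (lt_of_le_of_lt (add_le_add hintD' (le_of_eq hcomplnull))
      (by rw [add_zero]; exact ENNReal.ofReal_lt_top)).ne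
  -- choose δ
  obtain ⟨δ, hδ0, hδ⟩ := exists_pos_setLIntegral_lt_of_measure_lt hfin
    (ENNReal.ofReal_pos.2 hε).ne'
  obtain ⟨δ', hδ'1, hδ'2⟩ := exists_between hδ0
  refine ⟨δ'.toReal, ENNReal.toReal_pos hδ'1.ne' (hδ'2.trans_le le_top).ne, ?_⟩
  intro m p q hpq hNO hsum
  have hofδ : ENNReal.ofReal δ'.toReal < δ := by
    rw [ENNReal.ofReal_toReal (hδ'2.trans_le le_top).ne]
    exact hδ'2
  set U : Set ℝ := ⋃ i, Set.Ico (p i) (q i) with hU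
  have hdisj : Pairwise (Function.onFun Disjoint fun i => Set.Ico (p i) (q i)) := by
    intro i j hij
    rcases hNO i j hij with hc | hc
    · exact Set.disjoint_left.2 fun t ht ht' => absurd (lt_of_lt_of_le ht.2 (hc.trans ht'.1)) (lt_irrefl t)
    · exact Set.disjoint_left.2 fun t ht ht' => absurd (lt_of_lt_of_le ht'.2 (hc.trans ht.1)) (lt_irrefl t)
  have hUvol : volume U < δ := by
    have h1 : volume U ≤ ∑ i, volume (Set.Ico (p i) (q i)) :=
      measure_iUnion_fintype_le volume _
    have h2 : ∑ i, volume (Set.Ico (p i) (q i)) = ENNReal.ofReal (∑ i, (q i - p i)) := by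
      rw [ENNReal.ofReal_sum_of_nonneg (fun i _ => sub_nonneg.2 (hpq i).1)]
      exact Finset.sum_congr rfl fun i _ => Real.volume_Ico
    calc volume U ≤ ENNReal.ofReal (∑ i, (q i - p i)) := h1.trans_eq h2
      _ ≤ ENNReal.ofReal δ'.toReal := ENNReal.ofReal_le_ofReal hsum.le
      _ < δ := hofδ
  -- per-interval estimate
  have step1 : ∀ i, ENNReal.ofReal |g (q i) - g (p i)| ≤ volume (g '' Set.Icc (p i) (q i)) := by
    intro i
    have hsub : Set.Icc (p i) (q i) ⊆ s := (hpq i).2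
    have hcg : ContinuousOn g (Set.uIcc (p i) (q i)) := by
      rw [uIcc_of_le (hpq i).1]; exact hcont.mono hsub
    have hIVT := intermediate_value_uIcc hcg
    calc ENNReal.ofReal |g (q i) - g (p i)|
        = volume (Set.uIcc (g (p i)) (g (q i))) := by
          rw [uIcc, Real.volume_Icc]
          congr 1
          rw [max_sub_min_eq_abs, abs_sub_comm]
      _ ≤ volume (g '' Set.uIcc (p i) (q i)) := measure_mono hIVT
      _ = volume (g '' Set.Icc (p i) (q i)) := by rw [uIcc_of_le (hpq i).1]
  have step2 : ∀ i, volume (g '' Set.Icc (p i) (q i)) ≤ ∫⁻ x in Set.Ico (p i) (q i), h x := by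
    intro i
    have hsub : Set.Icc (p i) (q i) ⊆ s := (hpq i).2
    have hsplit : g '' Set.Icc (p i) (q i) ⊆
        g '' (D ∩ Set.Icc (p i) (q i)) ∪ g '' (Set.Icc (p i) (q i) \ D) := by
      rw [← Set.image_union]
      apply Set.image_mono
      intro x hx
      by_cases hxD : x ∈ D
      · exact Or.inl ⟨hxD, hx⟩
      · exact Or.inr ⟨hx, hxD⟩
    have hnull : volume (g '' (Set.Icc (p i) (q i) \ D)) = 0 :=
      hN _ (fun x hx => hsub hx.1)
        (measure_mono_null (fun x hx => show x ∈ s \ D from ⟨hsub hx.1, hx.2⟩) hZ)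
    have hjac : volume (g '' (D ∩ Set.Icc (p i) (q i))) ≤
        ∫⁻ x in D ∩ Set.Icc (p i) (q i), ENNReal.ofReal |deriv g x| := by
      have hle := addHaar_image_le_lintegral_abs_det_fderiv volume
        (s := D ∩ Set.Icc (p i) (q i)) (hDmeas.inter measurableSet_Icc)
        (f' := fun x => (1 : ℝ →L[ℝ] ℝ).smulRight (deriv g x))
        (fun x hx => ((hDg x hx.1).hasFDerivAt).hasFDerivWithinAt)
      simpa only [ContinuousLinearMap.smulRight_one_eq_toSpanSingleton, ContinuousLinearMap.det_toSpanSingleton] using hle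
    have hmono2 : ∫⁻ x in D ∩ Set.Icc (p i) (q i), ENNReal.ofReal |deriv g x| ≤
        ∫⁻ x in D ∩ Set.Icc (p i) (q i), h x :=
      setLIntegral_mono' (hDmeas.inter measurableSet_Icc)
        (fun x hx => ENNReal.ofReal_le_ofReal (hcmp x hx.1))
    have hmono3 : ∫⁻ x in D ∩ Set.Icc (p i) (q i), h x ≤
        ∫⁻ x in Set.Ico (p i) (q i), h x := by
      have hsub2 : D ∩ Set.Icc (p i) (q i) ⊆ Set.Ico (p i) (q i) ∪ {q i} := by
        rintro x ⟨_, hx1, hx2⟩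
        rcases lt_or_eq_of_le hx2 with hlt | heq
        · exact Or.inl ⟨hx1, hlt⟩
        · exact Or.inr heq
      calc ∫⁻ x in D ∩ Set.Icc (p i) (q i), h x
          ≤ ∫⁻ x in Set.Ico (p i) (q i) ∪ {q i}, h x := lintegral_mono_set hsub2
        _ ≤ (∫⁻ x in Set.Ico (p i) (q i), h x) + ∫⁻ x in ({q i} : Set ℝ), h x :=
            lintegral_union_le _ _ _
        _ = ∫⁻ x in Set.Ico (p i) (q i), h x := by
            rw [setLIntegral_measure_zero _ _ Real.volume_singleton, add_zero]
    calc volume (g '' Set.Icc (p i) (q i))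
        ≤ volume (g '' (D ∩ Set.Icc (p i) (q i))) +
            volume (g '' (Set.Icc (p i) (q i) \ D)) :=
          (measure_mono hsplit).trans (measure_union_le _ _)
      _ = volume (g '' (D ∩ Set.Icc (p i) (q i))) := by rw [hnull, add_zero]
      _ ≤ ∫⁻ x in Set.Ico (p i) (q i), h x := hjac.trans (hmono2.trans hmono3)
  -- sum up
  have hsumle : ENNReal.ofReal (∑ i, |g (q i) - g (p i)|) < ENNReal.ofReal ε := by
    calc ENNReal.ofReal (∑ i, |g (q i) - g (p i)|)
        = ∑ i, ENNReal.ofReal |g (q i) - g (p i)| :=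
          ENNReal.ofReal_sum_of_nonneg (fun i _ => abs_nonneg _)
      _ ≤ ∑ i, ∫⁻ x in Set.Ico (p i) (q i), h x :=
          Finset.sum_le_sum fun i _ => (step1 i).trans (step2 i)
      _ = ∑ i, (volume.withDensity h) (Set.Ico (p i) (q i)) := by
          exact Finset.sum_congr rfl fun i _ => (withDensity_apply h measurableSet_Ico).symm
      _ = (volume.withDensity h) U := by
          rw [hU, measure_iUnion hdisj (fun i => measurableSet_Ico), tsum_fintype]
      _ = ∫⁻ x in U, h x := withDensity_apply h (MeasurableSet.iUnion fun i => measurableSet_Ico)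
      _ < ENNReal.ofReal ε := hδ U hUvol
  have hnn : 0 ≤ ∑ i, |g (q i) - g (p i)| := Finset.sum_nonneg fun i _ => abs_nonneg _
  exact (ENNReal.ofReal_lt_ofReal_iff_of_nonneg hnn).1 hsumle
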